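/- Let n, k be natural numbers with 1 ≤ k ≤ n and let g₁ ≤ g₂ ≤ ··· ≤ gₙ be real numbers indexed by {1,...,n}. Define s_i = (1/C(n,k)) · ∑_{I ⊆ {1,...,n}, |I| = k, i ∈ I} max_{j∈I} g_j, and define m_{ii} = C(i−1, k−1) if i ≥ k and 0 otherwise, and for j > i, m_{ij} = C(j−2, k−2) if j ≥ k and k ≥ 2, and 0 otherwise. Then s_n = C(n−1, k−1)·g_n / C(n,k), and for every 1 ≤ i < n: s_i = s_{i+1} + (1/C(n,k)) · ( g_i·m_{ii} + g_{i+1}·(m_{i,i+1} − m_{i+1,i+1}) ). -/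

import Mathlib

/-- The maximum of `g` over a finite index set `I` (equal to `max_{i ∈ I} g i`
whenever `I` is nonempty). -/
noncomputable def finsetMax {α : Type*} (I : Finset α) (g : α → ℝ) : ℝ :=
  WithBot.unbotD 0 (I.sup fun a => ((g a : ℝ) : WithBot ℝ))

/-- The matrix entries m_{ij}: m_{ii} = C(i−1, k−1) if i ≥ k and 0 otherwise;
for j > i, m_{ij} = C(j−2, k−2) if j ≥ k and k ≥ 2, and 0 otherwise. -/
noncomputable def mCoef (k i j : ℕ) : ℝ :=
  if j = i then (if k ≤ i then ((i - 1).choose (k - 1) : ℝ) else 0)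
  else if i < j then (if k ≤ j ∧ 2 ≤ k then ((j - 2).choose (k - 2) : ℝ) else 0)
  else 0

/-- s_i = (1/C(n,k)) ∑_{I ⊆ {1,...,n}, |I| = k, i ∈ I} max_{j∈I} g_j. -/
noncomputable def sVal (n k : ℕ) (g : ℕ → ℝ) (i : ℕ) : ℝ :=
  (1 / (n.choose k : ℝ)) *
    ∑ I ∈ (Finset.powersetCard k (Finset.Icc 1 n)).filter (fun I => i ∈ I),
      finsetMax I g

private lemma fmax_eq (n : ℕ) (g : ℕ → ℝ)
    (hg : ∀ i ∈ Finset.Icc 1 n, ∀ j ∈ Finset.Icc 1 n, i ≤ j → g i ≤ g j)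
    (I : Finset ℕ) (hI : I ⊆ Finset.Icc 1 n) {j : ℕ} (hj : j ∈ I)
    (hmax : ∀ x ∈ I, x ≤ j) : finsetMax I g = g j := by
  have hne : I.Nonempty := ⟨j, hj⟩
  have hc : (I.sup fun a => ((g a : ℝ) : WithBot ℝ)) = ((I.sup' hne g : ℝ) : WithBot ℝ) :=
    (Finset.coe_sup' hne g).symm
  rw [finsetMax, hc, WithBot.unbotD_coe]
  apply le_antisymm
  · exact Finset.sup'_le hne g fun x hx => hg x (hI hx) j (hI hj) (hmax x hx)
  · exact Finset.le_sup' g hj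

private lemma card_filter_mem (m k : ℕ) (hm : 1 ≤ m) (hk : 1 ≤ k) :
    (((Finset.Icc 1 m).powersetCard k).filter (fun I => m ∈ I)).card
      = (m - 1).choose (k - 1) := by
  have h := Finset.card_powersetCard (k - 1) (Finset.Icc 1 (m - 1))
  rw [Nat.card_Icc] at h
  simp only [Nat.add_sub_cancel] at h
  rw [← h]
  refine Finset.card_bij' (fun I _ => I.erase m) (fun J _ => insert m J) ?_ ?_ ?_ ?_
  · intro I hI
    simp only [Finset.mem_filter, Finset.mem_powersetCard] at hI
    obtain ⟨⟨hsub, hcard⟩, hmem⟩ := hI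
    rw [Finset.mem_powersetCard]
    constructor
    · intro x hx
      have hx' := Finset.mem_of_mem_erase hx
      have hxm := Finset.ne_of_mem_erase hx
      have := hsub hx'
      rw [Finset.mem_Icc] at this ⊢
      exact ⟨this.1, by omega⟩
    · rw [Finset.card_erase_of_mem hmem, hcard]
  · intro J hJ
    rw [Finset.mem_powersetCard] at hJ
    obtain ⟨hsub, hcard⟩ := hJ
    have hmJ : m ∉ J := by
      intro h
      have := hsub h
      rw [Finset.mem_Icc] at this
      omega
    simp only [Finset.mem_filter, Finset.mem_powersetCard]
    refine ⟨⟨?_, ?_⟩, Finset.mem_insert_self _ _⟩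
    · intro x hx
      rcases Finset.mem_insert.mp hx with h | h
      · subst h; rw [Finset.mem_Icc]; omega
      · have := hsub h; rw [Finset.mem_Icc] at this ⊢; omega
    · rw [Finset.card_insert_of_notMem hmJ, hcard]; omega
  · intro I hI
    simp only [Finset.mem_filter] at hI
    exact Finset.insert_erase hI.2
  · intro J hJ
    rw [Finset.mem_powersetCard] at hJ
    have hmJ : m ∉ J := by
      intro h
      have := hJ.1 h
      rw [Finset.mem_Icc] at this
      omega
    exact Finset.erase_insert hmJ

private lemma mcoef_diag (k i : ℕ) (hk : 1 ≤ k) (hi : 1 ≤ i) :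
    mCoef k i i = ((i - 1).choose (k - 1) : ℝ) := by
  rw [mCoef, if_pos rfl]
  split_ifs with h
  · rfl
  · rw [Nat.choose_eq_zero_of_lt (by omega)]
    simp

private lemma mcoef_step (k i : ℕ) (hk : 1 ≤ k) (hi : 1 ≤ i) :
    mCoef k i (i + 1) - mCoef k (i + 1) (i + 1) = -((i - 1).choose (k - 1) : ℝ) := by
  have h1 : ¬ (i + 1 = i) := by omega
  have h2 : i < i + 1 := Nat.lt_succ_self i
  simp only [mCoef, h1, if_false, h2, if_true, if_pos rfl]
  split_ifs with h1 h2 h3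
  · -- k ≤ i + 1 ∧ 2 ≤ k, k ≤ i + 1
    have e : (i + 1 - 1).choose (k - 1)
        = (i + 1 - 2).choose (k - 2) + (i - 1).choose (k - 1) := by
      obtain ⟨a, rfl⟩ : ∃ a, i = a + 1 := ⟨i - 1, by omega⟩
      obtain ⟨b, rfl⟩ : ∃ b, k = b + 2 := ⟨k - 2, by omega⟩
      simp [Nat.choose_succ_succ]
    rw [e]
    push_cast
    ring
  · exact absurd h1.1 h2
  · -- ¬(k ≤ i+1 ∧ 2 ≤ k), k ≤ i+1 : so k = 1
    have hk1 : k = 1 := by omega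
    subst hk1
    simp
  · -- k > i + 1 in both
    rw [Nat.choose_eq_zero_of_lt (by omega : i - 1 < k - 1)]
    simp

/-- For 1 ≤ k ≤ n and sorted reals g₁ ≤ ⋯ ≤ gₙ indexed by
{1,...,n}, we have s_n = C(n−1, k−1)·g_n / C(n,k), and for 1 ≤ i < n the
right-to-left recursion
s_i = s_{i+1} + (1/C(n,k))·(g_i·m_{ii} + g_{i+1}·(m_{i,i+1} − m_{i+1,i+1})). -/
theorem s_recursion (n k : ℕ) (hk : 1 ≤ k) (hkn : k ≤ n)
    (g : ℕ → ℝ) (hg : ∀ i ∈ Finset.Icc 1 n, ∀ j ∈ Finset.Icc 1 n, i ≤ j → g i ≤ g j) :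
    sVal n k g n = ((n - 1).choose (k - 1) : ℝ) * g n / (n.choose k : ℝ)
    ∧ ∀ i : ℕ, 1 ≤ i → i < n →
        sVal n k g i = sVal n k g (i + 1) +
          (1 / (n.choose k : ℝ)) *
            (g i * mCoef k i i + g (i + 1) * (mCoef k i (i + 1) - mCoef k (i + 1) (i + 1))) := by
  have hn : 1 ≤ n := le_trans hk hkn
  set P := Finset.powersetCard k (Finset.Icc 1 n) with hP
  constructor
  · -- s_n
    have hsum : ∀ I ∈ P.filter (fun I => n ∈ I), finsetMax I g = g n := by
      intro I hI
      simp only [Finset.mem_filter, hP, Finset.mem_powersetCard] at hI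
      refine fmax_eq n g hg I hI.1.1 hI.2 fun x hx => ?_
      have := hI.1.1 hx
      rw [Finset.mem_Icc] at this
      exact this.2
    rw [sVal, Finset.sum_congr rfl hsum, Finset.sum_const,
      card_filter_mem n k hn hk, nsmul_eq_mul]
    ring
  · intro i hi1 hin
    -- difference of the two sums
    have split : ∀ (a b : ℕ),
        ∑ I ∈ P.filter (fun I => a ∈ I), finsetMax I g
          = ∑ I ∈ P.filter (fun I => a ∈ I ∧ b ∈ I), finsetMax I g
            + ∑ I ∈ P.filter (fun I => a ∈ I ∧ b ∉ I), finsetMax I g := by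
      intro a b
      rw [← Finset.sum_filter_add_sum_filter_not (P.filter (fun I => a ∈ I))
        (fun I => b ∈ I), Finset.filter_filter, Finset.filter_filter]
    have hcomm : P.filter (fun I => i + 1 ∈ I ∧ i ∈ I)
        = P.filter (fun I => i ∈ I ∧ i + 1 ∈ I) := by
      apply Finset.filter_congr
      intro I _
      simp [and_comm]
    -- the swap bijection between A' and B'
    have hswap : ∑ J ∈ P.filter (fun I => i + 1 ∈ I ∧ i ∉ I), finsetMax J g
        = ∑ I ∈ P.filter (fun I => i ∈ I ∧ i + 1 ∉ I),
            finsetMax (insert (i + 1) (I.erase i)) g := by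
      apply Finset.sum_nbij' (fun J => insert i (J.erase (i + 1)))
        (fun I => insert (i + 1) (I.erase i))
      · intro J hJ
        simp only [Finset.mem_filter, hP, Finset.mem_powersetCard] at hJ ⊢
        obtain ⟨⟨hsub, hcard⟩, hmem, hnmem⟩ := hJ
        have hni : i ∉ J.erase (i + 1) := fun h => hnmem (Finset.mem_of_mem_erase h)
        refine ⟨⟨?_, ?_⟩, Finset.mem_insert_self _ _, ?_⟩
        · intro x hx
          rcases Finset.mem_insert.mp hx with h | h
          · subst h; rw [Finset.mem_Icc]; omega
          · exact hsub (Finset.mem_of_mem_erase h)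
        · rw [Finset.card_insert_of_notMem hni, Finset.card_erase_of_mem hmem, hcard]
          omega
        · intro h
          rcases Finset.mem_insert.mp h with h | h
          · omega
          · exact (Finset.ne_of_mem_erase h) rfl
      · intro I hI
        simp only [Finset.mem_filter, hP, Finset.mem_powersetCard] at hI ⊢
        obtain ⟨⟨hsub, hcard⟩, hmem, hnmem⟩ := hI
        have hni : (i + 1) ∉ I.erase i := fun h => hnmem (Finset.mem_of_mem_erase h)
        refine ⟨⟨?_, ?_⟩, Finset.mem_insert_self _ _, ?_⟩
        · intro x hx
          rcases Finset.mem_insert.mp hx with h | h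
          · subst h; rw [Finset.mem_Icc]; omega
          · exact hsub (Finset.mem_of_mem_erase h)
        · rw [Finset.card_insert_of_notMem hni, Finset.card_erase_of_mem hmem, hcard]
          omega
        · intro h
          rcases Finset.mem_insert.mp h with h | h
          · omega
          · exact (Finset.ne_of_mem_erase h) rfl
      · intro J hJ
        simp only [Finset.mem_filter] at hJ
        obtain ⟨_, hmem, hnmem⟩ := hJ
        have hni : i ∉ J.erase (i + 1) := fun h => hnmem (Finset.mem_of_mem_erase h)
        rw [Finset.erase_insert hni, Finset.insert_erase hmem]
      · intro I hI
        simp only [Finset.mem_filter] at hI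
        obtain ⟨_, hmem, hnmem⟩ := hI
        have hni : (i + 1) ∉ I.erase i := fun h => hnmem (Finset.mem_of_mem_erase h)
        rw [Finset.erase_insert hni, Finset.insert_erase hmem]
      · intro J hJ
        simp only [Finset.mem_filter] at hJ
        obtain ⟨_, hmem, hnmem⟩ := hJ
        have hni : i ∉ J.erase (i + 1) := fun h => hnmem (Finset.mem_of_mem_erase h)
        rw [Finset.erase_insert hni, Finset.insert_erase hmem]
    -- the difference over A'
    have hdiff : ∑ I ∈ P.filter (fun I => i ∈ I ∧ i + 1 ∉ I),
          (finsetMax I g - finsetMax (insert (i + 1) (I.erase i)) g)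
        = ((i - 1).choose (k - 1) : ℝ) * (g i - g (i + 1)) := by
      rw [← Finset.sum_filter_add_sum_filter_not
        (P.filter (fun I => i ∈ I ∧ i + 1 ∉ I)) (fun I => ∀ x ∈ I, x ≤ i)]
      have hz : ∑ I ∈ (P.filter (fun I => i ∈ I ∧ i + 1 ∉ I)).filter
            (fun I => ¬ ∀ x ∈ I, x ≤ i),
          (finsetMax I g - finsetMax (insert (i + 1) (I.erase i)) g) = 0 := by
        apply Finset.sum_eq_zero
        intro I hI
        simp only [Finset.mem_filter, hP, Finset.mem_powersetCard, not_forall] at hI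
        obtain ⟨⟨⟨hsub, hcard⟩, hmem, hnmem⟩, x, hx, hxgt⟩ := hI
        have hxgt' : ¬ x ≤ i := hxgt
        -- max element of I
        have hne : I.Nonempty := ⟨i, hmem⟩
        set M := I.max' hne with hM
        have hMmem : M ∈ I := I.max'_mem hne
        have hMmax : ∀ y ∈ I, y ≤ M := fun y hy => I.le_max' y hy
        have hMgt : i + 1 < M := by
          have h1 := hMmax x hx
          have : x ≠ i + 1 := fun h => hnmem (h ▸ hx)
          omega
        have hMne : M ≠ i := by omega
        have hMmem' : M ∈ insert (i + 1) (I.erase i) :=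
          Finset.mem_insert_of_mem (Finset.mem_erase.mpr ⟨hMne, hMmem⟩)
        have hsub' : insert (i + 1) (I.erase i) ⊆ Finset.Icc 1 n := by
          intro y hy
          rcases Finset.mem_insert.mp hy with h | h
          · subst h; rw [Finset.mem_Icc]; omega
          · exact hsub (Finset.mem_of_mem_erase h)
        have e1 : finsetMax I g = g M := fmax_eq n g hg I hsub hMmem hMmax
        have e2 : finsetMax (insert (i + 1) (I.erase i)) g = g M := by
          refine fmax_eq n g hg _ hsub' hMmem' fun y hy => ?_
          rcases Finset.mem_insert.mp hy with h | h
          · omega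
          · exact hMmax y (Finset.mem_of_mem_erase h)
        rw [e1, e2, sub_self]
      rw [hz, add_zero]
      have hval : ∀ I ∈ (P.filter (fun I => i ∈ I ∧ i + 1 ∉ I)).filter
            (fun I => ∀ x ∈ I, x ≤ i),
          (finsetMax I g - finsetMax (insert (i + 1) (I.erase i)) g) = g i - g (i + 1) := by
        intro I hI
        simp only [Finset.mem_filter, hP, Finset.mem_powersetCard] at hI
        obtain ⟨⟨⟨hsub, hcard⟩, hmem, hnmem⟩, hle⟩ := hI
        have hsub' : insert (i + 1) (I.erase i) ⊆ Finset.Icc 1 n := by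
          intro y hy
          rcases Finset.mem_insert.mp hy with h | h
          · subst h; rw [Finset.mem_Icc]; omega
          · exact hsub (Finset.mem_of_mem_erase h)
        have e1 : finsetMax I g = g i := fmax_eq n g hg I hsub hmem hle
        have e2 : finsetMax (insert (i + 1) (I.erase i)) g = g (i + 1) := by
          refine fmax_eq n g hg _ hsub' (Finset.mem_insert_self _ _) fun y hy => ?_
          rcases Finset.mem_insert.mp hy with h | h
          · omega
          · have := hle y (Finset.mem_of_mem_erase h); omega
        rw [e1, e2]
      rw [Finset.sum_congr rfl hval, Finset.sum_const, nsmul_eq_mul]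
      congr 1
      -- count the sets
      have hset : (P.filter (fun I => i ∈ I ∧ i + 1 ∉ I)).filter (fun I => ∀ x ∈ I, x ≤ i)
          = ((Finset.Icc 1 i).powersetCard k).filter (fun I => i ∈ I) := by
        ext I
        simp only [Finset.mem_filter, hP, Finset.mem_powersetCard]
        constructor
        · rintro ⟨⟨⟨hsub, hcard⟩, hmem, hnmem⟩, hle⟩
          refine ⟨⟨?_, hcard⟩, hmem⟩
          intro x hx
          have := hsub hx
          rw [Finset.mem_Icc] at this ⊢
          exact ⟨this.1, hle x hx⟩
        · rintro ⟨⟨hsub, hcard⟩, hmem⟩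
          have hle : ∀ x ∈ I, x ≤ i := by
            intro x hx
            have := hsub hx
            rw [Finset.mem_Icc] at this
            exact this.2
          refine ⟨⟨⟨?_, hcard⟩, hmem, fun h => by have := hle _ h; omega⟩, hle⟩
          intro x hx
          have := hsub hx
          rw [Finset.mem_Icc] at this ⊢
          omega
      rw [hset, card_filter_mem i k hi1 hk]
    -- assemble
    have key : ∑ I ∈ P.filter (fun I => i ∈ I), finsetMax I g
        = ∑ I ∈ P.filter (fun I => i + 1 ∈ I), finsetMax I g
          + ((i - 1).choose (k - 1) : ℝ) * (g i - g (i + 1)) := by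
      rw [split i (i + 1), split (i + 1) i, hcomm, hswap]
      rw [← hdiff, Finset.sum_sub_distrib]
      ring
    rw [sVal, sVal, key, mcoef_diag k i hk hi1]
    have hstep := mcoef_step k i hk hi1
    rw [hstep]
    ring
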